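/- Let (X_i)_{i=1}^n be finite-valued random variables and (f_i, g_i)_{i=1}^{n-1} functions with f_i(X_i) = g_i(X_{i+1}) =: U_i almost surely, such that X_1 → U_1 → X_2 → U_2 → ... → U_{n-1} → X_n forms a Markov chain. Then H(X_1,...,X_n) + Σ_{i=1}^{n-1} H(U_i) = Σ_{i=1}^n H(X_i). -/

import Mathlib

open MeasureTheory ProbabilityTheory Real

lemma meas_eq_sum_inter {Ω : Type*} [MeasurableSpace Ω] (μ : Measure Ω)
    {ι : Type*} [Fintype ι] [DecidableEq ι] {SX : ι → Type*} [∀ i, Fintype (SX i)]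
    [∀ i, MeasurableSpace (SX i)] [∀ i, MeasurableSingletonClass (SX i)]
    (X : ∀ i, Ω → SX i) (hX : ∀ i, Measurable (X i)) (A : Set Ω)
    (hA : MeasurableSet A) :
    μ A = ∑ x : ∀ i, SX i, μ (A ∩ ⋂ j, X j ⁻¹' {x j}) := by
  have hU : A = ⋃ x : ∀ i, SX i, A ∩ ⋂ j, X j ⁻¹' {x j} := by
    ext ω
    simp only [Set.mem_iUnion, Set.mem_inter_iff, Set.mem_iInter, Set.mem_preimage,
      Set.mem_singleton_iff]
    constructor
    · intro h; exact ⟨fun j => X j ω, h, fun j => rfl⟩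
    · rintro ⟨x, h, -⟩; exact h
  have hd : Pairwise (Function.onFun Disjoint
      (fun x : ∀ i, SX i => A ∩ ⋂ j, X j ⁻¹' {x j})) := by
    intro x y hxy
    obtain ⟨j, hj⟩ : ∃ j, x j ≠ y j := by
      by_contra h; push_neg at h; exact hxy (funext h)
    apply Set.disjoint_left.2
    intro ω hω hω'
    apply hj
    have h1 : X j ω = x j := by
      have := hω.2; simp only [Set.mem_iInter, Set.mem_preimage, Set.mem_singleton_iff] at this
      exact this j
    have h2 : X j ω = y j := by
      have := hω'.2; simp only [Set.mem_iInter, Set.mem_preimage, Set.mem_singleton_iff] at this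
      exact this j
    rw [← h1, h2]
  have hm : ∀ x : ∀ i, SX i, MeasurableSet (A ∩ ⋂ j, X j ⁻¹' {x j}) := by
    intro x
    exact hA.inter (MeasurableSet.iInter fun j => (hX j) (measurableSet_singleton _))
  conv_lhs => rw [hU]
  rw [measure_iUnion hd hm, tsum_fintype]

lemma sum_negMulLog_eq {ι κ : Type*} [Fintype ι] [Fintype κ] [DecidableEq κ]
    (P : ι → ℝ) (T : κ → ℝ) (F : ι → κ)
    (h : ∀ k, T k = ∑ x, if F x = k then P x else 0) :
    ∑ k, Real.negMulLog (T k) = -∑ x, P x * Real.log (T (F x)) := by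
  have : ∀ k, Real.negMulLog (T k) = ∑ x, if F x = k then P x * (-Real.log (T k)) else 0 := by
    intro k
    rw [Real.negMulLog]
    conv_lhs => rw [h k]
    rw [neg_mul, ← mul_neg, Finset.sum_mul]
    congr 1; ext x
    by_cases hx : F x = k <;> simp [hx, ← h k]
  simp only [this]
  rw [Finset.sum_comm]
  rw [← Finset.sum_neg_distrib]
  congr 1; ext x
  rw [Finset.sum_ite_eq Finset.univ (F x) (fun k => P x * (-Real.log (T k)))]
  simp [mul_neg]

/-- Shannon entropy (natural log) of a finitely-valued random variable. -/
noncomputable def ent {Ω S : Type*} [MeasurableSpace Ω] [Fintype S]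
    (μ : Measure Ω) (X : Ω → S) : ℝ :=
  ∑ s : S, Real.negMulLog ((μ (X ⁻¹' {s})).toReal)

set_option maxHeartbeats 1000000 in
/-- The copy-lemma identity: if `U i := f i (X i) = g i (X (i+1))` a.s. and
`X 0 → U 0 → X 1 → U 1 → ⋯ → U (m-1) → X m` forms a Markov chain, then
`H(X 0,…,X m) + ∑ H(U i) = ∑ H(X i)`.  The Markov-chain property is expressed as
the conditional independence of the past and the future of the chain given each
intermediate variable. -/
theorem stmt1 {Ω : Type*} [MeasurableSpace Ω] (μ : Measure Ω) [IsProbabilityMeasure μ]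
    (m : ℕ) (SX : Fin (m + 1) → Type*) (SU : Fin m → Type*)
    [∀ i, Fintype (SX i)] [∀ i, Fintype (SU i)]
    [∀ i, MeasurableSpace (SX i)] [∀ i, MeasurableSpace (SU i)]
    [∀ i, MeasurableSingletonClass (SX i)] [∀ i, MeasurableSingletonClass (SU i)]
    (X : ∀ i, Ω → SX i)
    (f : ∀ i : Fin m, SX i.castSucc → SU i) (g : ∀ i : Fin m, SX i.succ → SU i)
    (hX : ∀ i, Measurable (X i))
    (hfg : ∀ i : Fin m, ∀ᵐ ω ∂μ, f i (X i.castSucc ω) = g i (X i.succ ω))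
    (hMCX : ∀ (i : Fin (m + 1)) (x : ∀ j, SX j) (u : ∀ j, SU j),
      μ ((((⋂ j, ⋂ (_ : j ≤ i), X j ⁻¹' {x j}) ∩
            ⋂ j, ⋂ (_ : j.castSucc < i), (fun ω => f j (X j.castSucc ω)) ⁻¹' {u j}) ∩
          ((⋂ j, ⋂ (_ : i ≤ j), X j ⁻¹' {x j}) ∩
            ⋂ j, ⋂ (_ : i ≤ j.castSucc), (fun ω => f j (X j.castSucc ω)) ⁻¹' {u j})))
        * μ (X i ⁻¹' {x i})
      = μ ((⋂ j, ⋂ (_ : j ≤ i), X j ⁻¹' {x j}) ∩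
            ⋂ j, ⋂ (_ : j.castSucc < i), (fun ω => f j (X j.castSucc ω)) ⁻¹' {u j})
        * μ ((⋂ j, ⋂ (_ : i ≤ j), X j ⁻¹' {x j}) ∩
            ⋂ j, ⋂ (_ : i ≤ j.castSucc), (fun ω => f j (X j.castSucc ω)) ⁻¹' {u j}))
    (hMCU : ∀ (i : Fin m) (x : ∀ j, SX j) (u : ∀ j, SU j),
      μ ((((⋂ j, ⋂ (_ : j ≤ i.castSucc), X j ⁻¹' {x j}) ∩
            ⋂ j, ⋂ (_ : j ≤ i), (fun ω => f j (X j.castSucc ω)) ⁻¹' {u j}) ∩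
          ((⋂ j, ⋂ (_ : i.castSucc < j), X j ⁻¹' {x j}) ∩
            ⋂ j, ⋂ (_ : i ≤ j), (fun ω => f j (X j.castSucc ω)) ⁻¹' {u j})))
        * μ ((fun ω => f i (X i.castSucc ω)) ⁻¹' {u i})
      = μ ((⋂ j, ⋂ (_ : j ≤ i.castSucc), X j ⁻¹' {x j}) ∩
            ⋂ j, ⋂ (_ : j ≤ i), (fun ω => f j (X j.castSucc ω)) ⁻¹' {u j})
        * μ ((⋂ j, ⋂ (_ : i.castSucc < j), X j ⁻¹' {x j}) ∩
            ⋂ j, ⋂ (_ : i ≤ j), (fun ω => f j (X j.castSucc ω)) ⁻¹' {u j})) :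
    ent μ (fun ω => fun i => X i ω)
      + (∑ i : Fin m, ent μ (fun ω => f i (X i.castSucc ω)))
    = ∑ i, ent μ (X i) := by
  classical
  -- notation
  set T : (∀ j, SX j) → Set Ω := fun x => ⋂ j, X j ⁻¹' {x j} with hT
  have hTmeas : ∀ x, MeasurableSet (T x) :=
    fun x => MeasurableSet.iInter fun j => (hX j) (measurableSet_singleton _)
  have hae : ∀ᵐ ω ∂μ, ∀ j : Fin m, f j (X j.castSucc ω) = g j (X j.succ ω) :=
    (ae_all_iff).2 hfg
  -- Step 1 : the ENNReal factorization for every x with μ (T x) ≠ 0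
  have hfact : ∀ x : ∀ j, SX j, μ (T x) ≠ 0 →
      μ (T x) * ∏ i : Fin m, μ ((fun ω => f i (X i.castSucc ω)) ⁻¹' {f i (x i.castSucc)})
        = ∏ j, μ (X j ⁻¹' {x j}) := by
    intro x hx
    -- consistency of the two descriptions of U along x
    have hcons : ∀ j : Fin m, f j (x j.castSucc) = g j (x j.succ) := by
      intro j
      by_contra hne
      apply hx
      have hsub : T x ⊆ {ω | ¬ (f j (X j.castSucc ω) = g j (X j.succ ω))} := by
        intro ω hω
        simp only [hT, Set.mem_iInter, Set.mem_preimage, Set.mem_singleton_iff] at hω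
        simp only [Set.mem_setOf_eq, hω j.castSucc, hω j.succ]
        exact hne
      have h0 : μ {ω | ¬ (f j (X j.castSucc ω) = g j (X j.succ ω))} = 0 :=
        ae_iff.1 (hfg j)
      exact le_antisymm (h0 ▸ measure_mono hsub) (zero_le)
    set u : ∀ j : Fin m, SU j := fun j => f j (x j.castSucc) with hu
    set A : Fin (m + 1) → Set Ω := fun k => ⋂ j, ⋂ (_ : j ≤ k), X j ⁻¹' {x j} with hA
    set B : Fin (m + 1) → Set Ω := fun k => ⋂ j, ⋂ (_ : k ≤ j), X j ⁻¹' {x j} with hB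
    have hAB : ∀ i, A i ∩ B i = T x := by
      intro i
      ext ω
      simp only [hA, hB, hT, Set.mem_inter_iff, Set.mem_iInter, Set.mem_preimage,
        Set.mem_singleton_iff]
      constructor
      · rintro ⟨h1, h2⟩ j
        rcases le_total j i with h | h
        · exact h1 j h
        · exact h2 j h
      · intro h; exact ⟨fun j _ => h j, fun j _ => h j⟩
    -- simplified Markov identity at each X i
    have hMCX' : ∀ i : Fin (m + 1),
        μ (T x) * μ (X i ⁻¹' {x i}) = μ (A i) * μ (B i) := by
      intro i
      have hpast : ((⋂ j, ⋂ (_ : j ≤ i), X j ⁻¹' {x j}) ∩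
          ⋂ j : Fin m, ⋂ (_ : j.castSucc < i), (fun ω => f j (X j.castSucc ω)) ⁻¹' {u j})
          = A i := by
        rw [hA]
        apply Set.inter_eq_left.2
        intro ω hω
        simp only [Set.mem_iInter, Set.mem_preimage, Set.mem_singleton_iff] at hω ⊢
        intro j hj
        rw [hω j.castSucc (le_of_lt hj)]
      have hfutae : (((⋂ j, ⋂ (_ : i ≤ j), X j ⁻¹' {x j}) ∩
          ⋂ j : Fin m, ⋂ (_ : i ≤ j.castSucc), (fun ω => f j (X j.castSucc ω)) ⁻¹' {u j})
          : Set Ω) =ᵐ[μ] B i := by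
        apply Filter.eventuallyEq_set.2
        filter_upwards [hae] with ω hω
        simp only [hB, Set.mem_inter_iff, Set.mem_iInter, Set.mem_preimage,
          Set.mem_singleton_iff]
        constructor
        · rintro ⟨h1, -⟩ j hj; exact h1 j hj
        · intro h
          refine ⟨h, fun j hj => ?_⟩
          have hle : i ≤ j.succ := le_trans hj (le_of_lt (Fin.castSucc_lt_succ : j.castSucc < j.succ))
          show f j (X j.castSucc ω) = f j (x j.castSucc)
          rw [hω j, h j.succ hle]
          exact (hcons j).symm
      have := hMCX i x u
      rw [hpast] at this
      rw [measure_congr hfutae] at this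
      rw [measure_congr ((Filter.EventuallyEq.refl _ _).inter hfutae)] at this
      rw [hAB i] at this
      exact this
    -- simplified Markov identity at each U i
    have hMCU' : ∀ i : Fin m,
        μ (T x) * μ ((fun ω => f i (X i.castSucc ω)) ⁻¹' {u i})
          = μ (A i.castSucc) * μ (B i.succ) := by
      intro i
      have hpast : ((⋂ j, ⋂ (_ : j ≤ i.castSucc), X j ⁻¹' {x j}) ∩
          ⋂ j : Fin m, ⋂ (_ : j ≤ i), (fun ω => f j (X j.castSucc ω)) ⁻¹' {u j})
          = A i.castSucc := by
        rw [hA]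
        apply Set.inter_eq_left.2
        intro ω hω
        simp only [Set.mem_iInter, Set.mem_preimage, Set.mem_singleton_iff] at hω ⊢
        intro j hj
        rw [hω j.castSucc (by exact Fin.castSucc_le_castSucc_iff.2 hj)]
      have hfutae : (((⋂ j, ⋂ (_ : i.castSucc < j), X j ⁻¹' {x j}) ∩
          ⋂ j : Fin m, ⋂ (_ : i ≤ j), (fun ω => f j (X j.castSucc ω)) ⁻¹' {u j})
          : Set Ω) =ᵐ[μ] B i.succ := by
        apply Filter.eventuallyEq_set.2
        filter_upwards [hae] with ω hω
        simp only [hB, Set.mem_inter_iff, Set.mem_iInter, Set.mem_preimage,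
          Set.mem_singleton_iff]
        constructor
        · rintro ⟨h1, -⟩ j hj
          exact h1 j (Fin.castSucc_lt_iff_succ_le.2 hj)
        · intro h
          refine ⟨fun j hj => h j (Fin.castSucc_lt_iff_succ_le.1 hj), fun j hj => ?_⟩
          have hle : i.succ ≤ j.succ := Fin.succ_le_succ_iff.2 hj
          show f j (X j.castSucc ω) = f j (x j.castSucc)
          rw [hω j, h j.succ hle]
          exact (hcons j).symm
      have hABU : A i.castSucc ∩ B i.succ = T x := by
        ext ω
        simp only [hA, hB, hT, Set.mem_inter_iff, Set.mem_iInter, Set.mem_preimage,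
          Set.mem_singleton_iff]
        constructor
        · rintro ⟨h1, h2⟩ j
          rcases le_or_gt j i.castSucc with h | h
          · exact h1 j h
          · exact h2 j (Fin.castSucc_lt_iff_succ_le.1 h)
        · intro h; exact ⟨fun j _ => h j, fun j _ => h j⟩
      have := hMCU i x u
      rw [hpast] at this
      rw [measure_congr hfutae] at this
      rw [measure_congr ((Filter.EventuallyEq.refl _ _).inter hfutae)] at this
      rw [hABU] at this
      exact this
    -- cancellation step
    have hstep : ∀ i : Fin m,
        μ (A i.castSucc) * μ (X i.succ ⁻¹' {x i.succ})
          = μ (A i.succ) * μ ((fun ω => f i (X i.castSucc ω)) ⁻¹' {u i}) := by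
      intro i
      have h1 := hMCX' i.succ
      have h2 := hMCU' i
      have key : μ (T x) * (μ (A i.castSucc) * μ (X i.succ ⁻¹' {x i.succ}))
          = μ (T x) * (μ (A i.succ) * μ ((fun ω => f i (X i.castSucc ω)) ⁻¹' {u i})) := by
        calc μ (T x) * (μ (A i.castSucc) * μ (X i.succ ⁻¹' {x i.succ}))
            = (μ (T x) * μ (X i.succ ⁻¹' {x i.succ})) * μ (A i.castSucc) := by ring
          _ = (μ (A i.succ) * μ (B i.succ)) * μ (A i.castSucc) := by rw [h1]
          _ = μ (A i.succ) * (μ (A i.castSucc) * μ (B i.succ)) := by ring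
          _ = μ (A i.succ) * (μ (T x) * μ ((fun ω => f i (X i.castSucc ω)) ⁻¹' {u i})) := by
              rw [h2]
          _ = μ (T x) * (μ (A i.succ) * μ ((fun ω => f i (X i.castSucc ω)) ⁻¹' {u i})) := by
              ring
      exact (ENNReal.mul_right_inj hx (measure_ne_top μ _)).1 key
    -- telescoping induction
    have hind : ∀ k : Fin (m + 1),
        μ (A k) * ∏ i ∈ Finset.univ.filter (fun i : Fin m => i.castSucc < k),
            μ ((fun ω => f i (X i.castSucc ω)) ⁻¹' {u i})
          = ∏ j ∈ Finset.univ.filter (fun j : Fin (m + 1) => j ≤ k), μ (X j ⁻¹' {x j}) := by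
      intro k
      induction k using Fin.induction with
      | zero =>
        have hA0 : A 0 = X 0 ⁻¹' {x 0} := by
          ext ω
          simp only [hA, Set.mem_iInter, Set.mem_preimage, Set.mem_singleton_iff]
          constructor
          · intro h; exact h 0 le_rfl
          · intro h j hj
            have : j = 0 := Fin.le_zero_iff.1 hj
            subst this; exact h
        have he : Finset.univ.filter (fun i : Fin m => i.castSucc < (0 : Fin (m+1))) = ∅ := by
          ext i; simp [Fin.not_lt_zero]
        have hs : Finset.univ.filter (fun j : Fin (m + 1) => j ≤ (0 : Fin (m+1))) = {0} := by
          ext j; simp [Fin.le_zero_iff]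
        rw [hA0, he, hs, Finset.prod_empty, Finset.prod_singleton, mul_one]
      | succ i ih =>
        have hfu : Finset.univ.filter (fun j : Fin m => j.castSucc < i.succ)
            = insert i (Finset.univ.filter (fun j : Fin m => j.castSucc < i.castSucc)) := by
          ext j
          simp only [Finset.mem_filter, Finset.mem_univ, true_and, Finset.mem_insert]
          rw [Fin.castSucc_lt_succ_iff, Fin.castSucc_lt_castSucc_iff]
          rw [le_iff_lt_or_eq]
          tauto
        have hfx : Finset.univ.filter (fun j : Fin (m + 1) => j ≤ i.succ)
            = insert i.succ (Finset.univ.filter (fun j : Fin (m + 1) => j ≤ i.castSucc)) := by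
          ext j
          simp only [Finset.mem_filter, Finset.mem_univ, true_and, Finset.mem_insert]
          rw [le_iff_lt_or_eq, ← Fin.le_castSucc_iff]
          tauto
        have hnotmem : i ∉ Finset.univ.filter (fun j : Fin m => j.castSucc < i.castSucc) := by
          simp
        have hnotmem' : i.succ ∉
            Finset.univ.filter (fun j : Fin (m + 1) => j ≤ i.castSucc) := by
          simp only [Finset.mem_filter, Finset.mem_univ, true_and]
          exact fun h => absurd (lt_of_le_of_lt h (Fin.castSucc_lt_succ : i.castSucc < i.succ)) (lt_irrefl _)
        rw [hfu, hfx, Finset.prod_insert hnotmem, Finset.prod_insert hnotmem']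
        calc μ (A i.succ) * (μ ((fun ω => f i (X i.castSucc ω)) ⁻¹' {u i})
              * ∏ j ∈ Finset.univ.filter (fun j : Fin m => j.castSucc < i.castSucc),
                  μ ((fun ω => f j (X j.castSucc ω)) ⁻¹' {u j}))
            = (μ (A i.succ) * μ ((fun ω => f i (X i.castSucc ω)) ⁻¹' {u i}))
              * ∏ j ∈ Finset.univ.filter (fun j : Fin m => j.castSucc < i.castSucc),
                  μ ((fun ω => f j (X j.castSucc ω)) ⁻¹' {u j}) := by ring
          _ = (μ (A i.castSucc) * μ (X i.succ ⁻¹' {x i.succ}))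
              * ∏ j ∈ Finset.univ.filter (fun j : Fin m => j.castSucc < i.castSucc),
                  μ ((fun ω => f j (X j.castSucc ω)) ⁻¹' {u j}) := by rw [← hstep i]
          _ = μ (X i.succ ⁻¹' {x i.succ})
              * (μ (A i.castSucc)
              * ∏ j ∈ Finset.univ.filter (fun j : Fin m => j.castSucc < i.castSucc),
                  μ ((fun ω => f j (X j.castSucc ω)) ⁻¹' {u j})) := by ring
          _ = μ (X i.succ ⁻¹' {x i.succ})
              * ∏ j ∈ Finset.univ.filter (fun j : Fin (m + 1) => j ≤ i.castSucc),
                  μ (X j ⁻¹' {x j}) := by rw [ih]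
    -- specialize at the last index
    have hlast := hind (Fin.last m)
    have hAlast : A (Fin.last m) = T x := by
      ext ω
      simp only [hA, hT, Set.mem_iInter, Set.mem_preimage, Set.mem_singleton_iff]
      exact ⟨fun h j => h j (Fin.le_last j), fun h j _ => h j⟩
    have hf1 : Finset.univ.filter (fun i : Fin m => i.castSucc < Fin.last m)
        = Finset.univ := by
      ext i; simp [Fin.castSucc_lt_last]
    have hf2 : Finset.univ.filter (fun j : Fin (m + 1) => j ≤ Fin.last m)
        = Finset.univ := by
      ext j; simp [Fin.le_last]
    rw [hAlast, hf1, hf2] at hlast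
    exact hlast
  -- Step 2 : marginalization identities
  have hmargX : ∀ (i : Fin (m + 1)) (s : SX i),
      μ (X i ⁻¹' {s}) = ∑ x : ∀ j, SX j, if x i = s then μ (T x) else 0 := by
    intro i s
    rw [meas_eq_sum_inter μ X hX _ ((hX i) (measurableSet_singleton _))]
    congr 1; ext x
    by_cases hxi : x i = s
    · rw [if_pos hxi]
      congr 1
      apply Set.inter_eq_right.2
      intro ω hω
      simp only [hT, Set.mem_iInter, Set.mem_preimage, Set.mem_singleton_iff] at hω
      simp [Set.mem_preimage, hω i, hxi]
    · rw [if_neg hxi]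
      convert measure_empty
      · apply Set.eq_empty_iff_forall_notMem.2
        intro ω hω
        apply hxi
        simp only [hT, Set.mem_inter_iff, Set.mem_preimage, Set.mem_singleton_iff,
          Set.mem_iInter] at hω
        rw [← hω.2 i, hω.1]
      · infer_instance
  have hmargU : ∀ (i : Fin m) (v : SU i),
      μ ((fun ω => f i (X i.castSucc ω)) ⁻¹' {v})
        = ∑ x : ∀ j, SX j, if f i (x i.castSucc) = v then μ (T x) else 0 := by
    intro i v
    have hmU : MeasurableSet ((fun ω => f i (X i.castSucc ω)) ⁻¹' {v}) := by
      have : (fun ω => f i (X i.castSucc ω)) ⁻¹' {v} = X i.castSucc ⁻¹' (f i ⁻¹' {v}) := rfl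
      rw [this]
      exact hX i.castSucc ((Set.to_countable _).measurableSet)
    rw [meas_eq_sum_inter μ X hX _ hmU]
    congr 1; ext x
    by_cases hxi : f i (x i.castSucc) = v
    · rw [if_pos hxi]
      congr 1
      apply Set.inter_eq_right.2
      intro ω hω
      simp only [hT, Set.mem_iInter, Set.mem_preimage, Set.mem_singleton_iff] at hω
      simp [Set.mem_preimage, hω i.castSucc, hxi]
    · rw [if_neg hxi]
      convert measure_empty
      · apply Set.eq_empty_iff_forall_notMem.2
        intro ω hω
        apply hxi
        simp only [hT, Set.mem_inter_iff, Set.mem_preimage, Set.mem_singleton_iff,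
          Set.mem_iInter] at hω
        rw [← hω.2 i.castSucc, hω.1]
      · infer_instance
  -- Step 3 : entropies
  have hpre : ∀ x : ∀ j, SX j, (fun ω => fun i => X i ω) ⁻¹' {x} = T x := by
    intro x; ext ω
    simp only [hT, Set.mem_preimage, Set.mem_singleton_iff, Set.mem_iInter, funext_iff]
  have hent_joint : ent μ (fun ω => fun i => X i ω)
      = ∑ x : ∀ j, SX j, Real.negMulLog ((μ (T x)).toReal) := by
    unfold ent
    exact Finset.sum_congr rfl fun x _ => by rw [hpre x]
  have htoX : ∀ (i : Fin (m+1)) (s : SX i), (μ (X i ⁻¹' {s})).toReal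
      = ∑ x : ∀ j, SX j, if x i = s then (μ (T x)).toReal else 0 := by
    intro i s
    rw [hmargX i s, ENNReal.toReal_sum]
    · exact Finset.sum_congr rfl fun x _ => by split <;> simp
    · intro x _; split
      · exact measure_ne_top μ _
      · exact ENNReal.zero_ne_top
  have htoU : ∀ (i : Fin m) (v : SU i), (μ ((fun ω => f i (X i.castSucc ω)) ⁻¹' {v})).toReal
      = ∑ x : ∀ j, SX j, if f i (x i.castSucc) = v then (μ (T x)).toReal else 0 := by
    intro i v
    rw [hmargU i v, ENNReal.toReal_sum]
    · exact Finset.sum_congr rfl fun x _ => by split <;> simp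
    · intro x _; split
      · exact measure_ne_top μ _
      · exact ENNReal.zero_ne_top
  have hentX : ∀ i : Fin (m+1), ent μ (X i)
      = -∑ x : ∀ j, SX j, (μ (T x)).toReal * Real.log ((μ (X i ⁻¹' {x i})).toReal) := by
    intro i
    unfold ent
    exact sum_negMulLog_eq (fun x : ∀ j, SX j => (μ (T x)).toReal)
      (fun s => (μ (X i ⁻¹' {s})).toReal) (fun x => x i) (htoX i)
  have hentU : ∀ i : Fin m, ent μ (fun ω => f i (X i.castSucc ω))
      = -∑ x : ∀ j, SX j, (μ (T x)).toReal
          * Real.log ((μ ((fun ω => f i (X i.castSucc ω)) ⁻¹' {f i (x i.castSucc)})).toReal) := by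
    intro i
    unfold ent
    exact sum_negMulLog_eq (fun x : ∀ j, SX j => (μ (T x)).toReal)
      (fun v => (μ ((fun ω => f i (X i.castSucc ω)) ⁻¹' {v})).toReal)
      (fun x => f i (x i.castSucc)) (htoU i)
  have key : ∀ x : ∀ j, SX j, Real.negMulLog ((μ (T x)).toReal)
      = (∑ i : Fin m, (μ (T x)).toReal
            * Real.log ((μ ((fun ω => f i (X i.castSucc ω)) ⁻¹' {f i (x i.castSucc)})).toReal))
        - ∑ j, (μ (T x)).toReal * Real.log ((μ (X j ⁻¹' {x j})).toReal) := by
    intro x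
    by_cases hx : μ (T x) = 0
    · simp [hx]
    · have hTpos : 0 < (μ (T x)).toReal := ENNReal.toReal_pos hx (measure_ne_top μ _)
      have hsubX : ∀ j, T x ⊆ X j ⁻¹' {x j} := fun j => Set.iInter_subset _ j
      have hsubU : ∀ i : Fin m,
          T x ⊆ (fun ω => f i (X i.castSucc ω)) ⁻¹' {f i (x i.castSucc)} := by
        intro i ω hω
        have := hsubX i.castSucc hω
        simp only [Set.mem_preimage, Set.mem_singleton_iff] at this ⊢
        rw [this]
      have hXpos : ∀ j, 0 < (μ (X j ⁻¹' {x j})).toReal := fun j =>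
        ENNReal.toReal_pos (fun h => hx (le_antisymm (h ▸ measure_mono (hsubX j)) (zero_le)))
          (measure_ne_top μ _)
      have hUpos : ∀ i : Fin m,
          0 < (μ ((fun ω => f i (X i.castSucc ω)) ⁻¹' {f i (x i.castSucc)})).toReal := fun i =>
        ENNReal.toReal_pos (fun h => hx (le_antisymm (h ▸ measure_mono (hsubU i)) (zero_le)))
          (measure_ne_top μ _)
      have hreal : (μ (T x)).toReal
          * ∏ i : Fin m, (μ ((fun ω => f i (X i.castSucc ω)) ⁻¹' {f i (x i.castSucc)})).toReal
          = ∏ j, (μ (X j ⁻¹' {x j})).toReal := by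
        have := congrArg ENNReal.toReal (hfact x hx)
        rwa [ENNReal.toReal_mul, ENNReal.toReal_prod, ENNReal.toReal_prod] at this
      have hlog := congrArg Real.log hreal
      rw [Real.log_mul (ne_of_gt hTpos) (ne_of_gt (Finset.prod_pos (fun i _ => hUpos i))),
        Real.log_prod (fun i _ => ne_of_gt (hUpos i)),
        Real.log_prod (fun j _ => ne_of_gt (hXpos j))] at hlog
      have hlogT : Real.log ((μ (T x)).toReal)
          = ∑ j, Real.log ((μ (X j ⁻¹' {x j})).toReal)
            - ∑ i : Fin m, Real.log
                ((μ ((fun ω => f i (X i.castSucc ω)) ⁻¹' {f i (x i.castSucc)})).toReal) := by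
        linarith
      rw [Real.negMulLog, hlogT, ← Finset.mul_sum, ← Finset.mul_sum]
      ring
  rw [hent_joint]
  simp only [hentU, hentX]
  simp only [key]
  rw [Finset.sum_sub_distrib]
  have c1 : ∑ x : ∀ j, SX j, ∑ i : Fin m, (μ (T x)).toReal
        * Real.log ((μ ((fun ω => f i (X i.castSucc ω)) ⁻¹' {f i (x i.castSucc)})).toReal)
      = ∑ i : Fin m, ∑ x : ∀ j, SX j, (μ (T x)).toReal
        * Real.log ((μ ((fun ω => f i (X i.castSucc ω)) ⁻¹' {f i (x i.castSucc)})).toReal) :=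
    Finset.sum_comm
  have c2 : ∑ x : ∀ j, SX j, ∑ j, (μ (T x)).toReal * Real.log ((μ (X j ⁻¹' {x j})).toReal)
      = ∑ j, ∑ x : ∀ j, SX j, (μ (T x)).toReal * Real.log ((μ (X j ⁻¹' {x j})).toReal) :=
    Finset.sum_comm
  rw [c1, c2, Finset.sum_neg_distrib, Finset.sum_neg_distrib]
  ring
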